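/- Let H be a finite-dimensional complex inner product space, let d_1, …, d_m ∈ H be linearly independent, let N be an orthogonal projection on H, let φ_{as} ∈ H (1 ≤ a ≤ m, 1 ≤ s ≤ r), fix k ∈ {1,…,m}, and let σ be a linear operator on H. Then the identity ∑_{a,b=1}^m ∑_{s=1}^r ⟨N φ_{as}, B N φ_{bs}⟩ |d_a⟩⟨d_b| = tr(B σ) |d_k⟩⟨d_k| holds for every linear operator B on H if and only if ∑_{s=1}^r |N φ_{bs}⟩⟨N φ_{as}| = δ_{ak} δ_{bk} σ for all 1 ≤ a, b ≤ m. -/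

import Mathlib

/-- The rank-one operator `|u⟩⟨v| : ψ ↦ ⟨v, ψ⟩ u` (inner product conjugate-linear in the
first argument, linear in the second). -/
noncomputable def rankOne {H : Type*} [NormedAddCommGroup H] [InnerProductSpace ℂ H]
    (u v : H) : H →ₗ[ℂ] H where
  toFun ψ := (inner ℂ v ψ : ℂ) • u
  map_add' x y := by simp [inner_add_right, add_smul]
  map_smul' c x := by simp [inner_smul_right, smul_smul]



section aux
variable {H : Type*} [NormedAddCommGroup H] [InnerProductSpace ℂ H]

@[simp] lemma rankOne_apply (u v ψ : H) : rankOne u v ψ = (inner ℂ v ψ : ℂ) • u := rfl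

lemma comp_rankOne (B : H →ₗ[ℂ] H) (u v : H) : B ∘ₗ rankOne u v = rankOne (B u) v := by
  ext ψ; simp

lemma trace_rankOne [FiniteDimensional ℂ H] (u v : H) :
    LinearMap.trace ℂ H (rankOne u v) = (inner ℂ v u : ℂ) := by
  let b := stdOrthonormalBasis ℂ H
  rw [LinearMap.trace_eq_matrix_trace ℂ b.toBasis, Matrix.trace]
  simp only [Matrix.diag, LinearMap.toMatrix_apply, OrthonormalBasis.coe_toBasis,
    OrthonormalBasis.coe_toBasis_repr_apply, rankOne_apply, map_smul, smul_eq_mul,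
    OrthonormalBasis.repr_apply_apply]
  simp [OrthonormalBasis.coe_toBasis_repr_apply, OrthonormalBasis.repr_apply_apply]
  exact OrthonormalBasis.sum_inner_mul_inner b v u

lemma trace_rankOne_comp [FiniteDimensional ℂ H] (u v : H) (T : H →ₗ[ℂ] H) :
    LinearMap.trace ℂ H (rankOne u v ∘ₗ T) = (inner ℂ v (T u) : ℂ) := by
  rw [← Module.End.mul_eq_comp, LinearMap.trace_mul_comm, Module.End.mul_eq_comp,
    comp_rankOne, trace_rankOne]

lemma rankOne_killer {m : ℕ} {d : Fin m → H} (hd : LinearIndependent ℂ d)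
    (c : Fin m → Fin m → ℂ)
    (h : ∑ a : Fin m, ∑ b : Fin m, c a b • rankOne (d a) (d b) = 0) :
    ∀ a b, c a b = 0 := by
  intro a b
  have key : ∀ ψ : H, ∑ b' : Fin m, c a b' * (inner ℂ (d b') ψ : ℂ) = 0 := by
    intro ψ
    have h1 := congrArg (fun T : H →ₗ[ℂ] H => T ψ) h
    simp only [LinearMap.sum_apply, LinearMap.smul_apply, rankOne_apply,
      LinearMap.zero_apply] at h1
    have h2 : ∑ a' : Fin m, (∑ b' : Fin m, c a' b' * (inner ℂ (d b') ψ : ℂ)) • d a' = 0 := by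
      rw [← h1]
      refine Finset.sum_congr rfl fun a' _ => ?_
      rw [Finset.sum_smul]
      refine Finset.sum_congr rfl fun b' _ => ?_
      rw [smul_smul]
    exact (Fintype.linearIndependent_iff.mp hd _ h2) a
  have key2 : (∑ b' : Fin m, (starRingEnd ℂ) (c a b') • d b') = 0 := by
    have h3 : ∀ ψ : H, (inner ℂ (∑ b' : Fin m, (starRingEnd ℂ) (c a b') • d b') ψ : ℂ) = 0 := by
      intro ψ
      rw [sum_inner]
      simpa [inner_smul_left] using key ψ
    have := h3 (∑ b' : Fin m, (starRingEnd ℂ) (c a b') • d b')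
    rwa [inner_self_eq_zero] at this
  have := (Fintype.linearIndependent_iff.mp hd _ key2) b
  simpa using this

end aux

/-- for linearly independent `d_1, …, d_m`, an orthogonal projection `N`,
Kraus vectors `φ_{as}`, a fixed `k`, and an operator `σ`, the identity
`∑_{a,b,s} ⟨Nφ_{as}, B Nφ_{bs}⟩ |d_a⟩⟨d_b| = tr(Bσ) |d_k⟩⟨d_k|` holds for all `B` iff
`∑_s |Nφ_{bs}⟩⟨Nφ_{as}| = δ_{ak} δ_{bk} σ` for all `a, b`. -/
theorem stmt_14 {H : Type*} [NormedAddCommGroup H] [InnerProductSpace ℂ H]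
    [FiniteDimensional ℂ H] (m r : ℕ) (d : Fin m → H)
    (hd : LinearIndependent ℂ d)
    (N : H →ₗ[ℂ] H) (hNproj : N ∘ₗ N = N) (hNsym : N.IsSymmetric)
    (φ : Fin m → Fin r → H) (k : Fin m) (σ : H →ₗ[ℂ] H) :
    (∀ B : H →ₗ[ℂ] H,
      ∑ a : Fin m, ∑ b : Fin m, ∑ s : Fin r,
          (inner ℂ (N (φ a s)) (B (N (φ b s))) : ℂ) • rankOne (d a) (d b)
        = (LinearMap.trace ℂ H (B ∘ₗ σ)) • rankOne (d k) (d k))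
    ↔ (∀ a b : Fin m,
        ∑ s : Fin r, rankOne (N (φ b s)) (N (φ a s))
          = if a = k ∧ b = k then σ else 0) := by
  classical
  -- abbreviation
  set T : Fin m → Fin m → (H →ₗ[ℂ] H) :=
    fun a b => ∑ s : Fin r, rankOne (N (φ b s)) (N (φ a s)) with hT
  have htr : ∀ (B : H →ₗ[ℂ] H) (a b : Fin m),
      ∑ s : Fin r, (inner ℂ (N (φ a s)) (B (N (φ b s))) : ℂ)
        = LinearMap.trace ℂ H (B ∘ₗ T a b) := by
    intro B a b
    rw [hT]
    have : B ∘ₗ ∑ s : Fin r, rankOne (N (φ b s)) (N (φ a s))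
        = ∑ s : Fin r, B ∘ₗ rankOne (N (φ b s)) (N (φ a s)) := by
      ext ψ; simp
    rw [this, map_sum]
    refine Finset.sum_congr rfl fun s _ => ?_
    rw [comp_rankOne, trace_rankOne]
  have hcollapse : ∀ t : ℂ,
      ∑ a : Fin m, ∑ b : Fin m,
        (if a = k ∧ b = k then t else 0) • rankOne (d a) (d b)
        = t • rankOne (d k) (d k) := by
    intro t
    rw [Finset.sum_eq_single k]
    · rw [Finset.sum_eq_single k]
      · simp
      · intro b _ hb; simp [hb]
      · simp
    · intro a _ ha
      apply Finset.sum_eq_zero; intro b _; simp [ha]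
    · simp
  constructor
  · intro h1 a b
    have key : ∀ B : H →ₗ[ℂ] H,
        LinearMap.trace ℂ H (B ∘ₗ T a b)
          = if a = k ∧ b = k then LinearMap.trace ℂ H (B ∘ₗ σ) else 0 := by
      intro B
      set c : Fin m → Fin m → ℂ := fun a' b' =>
        (∑ s : Fin r, (inner ℂ (N (φ a' s)) (B (N (φ b' s))) : ℂ))
          - (if a' = k ∧ b' = k then LinearMap.trace ℂ H (B ∘ₗ σ) else 0) with hc
      have hzero : ∑ a' : Fin m, ∑ b' : Fin m, c a' b' • rankOne (d a') (d b') = 0 := by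
        simp only [hc, sub_smul, Finset.sum_sub_distrib]
        rw [sub_eq_zero, hcollapse, ← h1 B]
        exact Finset.sum_congr rfl fun a' _ => Finset.sum_congr rfl fun b' _ =>
          Finset.sum_smul
      have := rankOne_killer hd c hzero a b
      rw [hc] at this
      have := sub_eq_zero.mp this
      rw [htr B a b] at this
      exact this
    show T a b = if a = k ∧ b = k then σ else 0
    by_cases hab : a = k ∧ b = k
    · simp only [hab, if_true] at key ⊢
      ext u
      refine ext_inner_left ℂ fun v => ?_
      have := key (rankOne u v)
      rwa [trace_rankOne_comp, trace_rankOne_comp] at this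
    · simp only [hab, if_false] at key ⊢
      ext u
      refine ext_inner_left ℂ fun v => ?_
      have := key (rankOne u v)
      rw [trace_rankOne_comp] at this
      simp only [LinearMap.zero_apply, inner_zero_right]
      exact this
  · intro h2 B
    have : ∀ a b : Fin m, ∑ s : Fin r,
        (inner ℂ (N (φ a s)) (B (N (φ b s))) : ℂ) • rankOne (d a) (d b)
        = (if a = k ∧ b = k then LinearMap.trace ℂ H (B ∘ₗ σ) else 0)
            • rankOne (d a) (d b) := by
      intro a b
      have h2' : T a b = if a = k ∧ b = k then σ else 0 := h2 a b
      rw [← Finset.sum_smul, htr B a b, h2']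
      by_cases hab : a = k ∧ b = k <;> simp [hab]
    calc ∑ a : Fin m, ∑ b : Fin m, ∑ s : Fin r,
          (inner ℂ (N (φ a s)) (B (N (φ b s))) : ℂ) • rankOne (d a) (d b)
        = ∑ a : Fin m, ∑ b : Fin m,
          (if a = k ∧ b = k then LinearMap.trace ℂ H (B ∘ₗ σ) else 0)
            • rankOne (d a) (d b) := by
          exact Finset.sum_congr rfl fun a _ => Finset.sum_congr rfl fun b _ => this a b
      _ = _ := hcollapse _
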